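/- For n = 3, on the interval (1, ∞) the function g₂(a) = 3(2a−1)(1+a)²/(√3a³+2√3a²+√3a−3) satisfies g₂'(a) ≤ 5√3/8 wherever the denominator is positive, while g₁(a) = (1+a²−a)^{3/2} satisfies g₁'(a) > 3/2. -/

import Mathlib

open Real

theorem stmt_18 (a : ℝ) (ha : 1 < a) :
    (let g₁ : ℝ → ℝ := fun x => (1 + x^2 - x) ^ ((3:ℝ)/2)
     let g₂ : ℝ → ℝ := fun x =>
        3 * (2*x - 1) * (1 + x)^2 /
          (Real.sqrt 3 * x^3 + 2 * Real.sqrt 3 * x^2 + Real.sqrt 3 * x - 3)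
     (0 < Real.sqrt 3 * a^3 + 2 * Real.sqrt 3 * a^2 + Real.sqrt 3 * a - 3 →
        deriv g₂ a ≤ 5 * Real.sqrt 3 / 8) ∧
     3/2 < deriv g₁ a) := by
  intro g₁ g₂
  have hs2 : Real.sqrt 3 ^ 2 = 3 := Real.sq_sqrt (by norm_num)
  have hspos : 0 < Real.sqrt 3 := Real.sqrt_pos.mpr (by norm_num)
  have hslb : (1.73 : ℝ) < Real.sqrt 3 := by nlinarith
  have hsub : Real.sqrt 3 < (1.75 : ℝ) := by nlinarith
  constructor
  · intro hD
    have hNe : Real.sqrt 3 * a ^ 3 + 2 * Real.sqrt 3 * a ^ 2 + Real.sqrt 3 * a - 3 ≠ 0 :=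
      ne_of_gt hD
    have hN : HasDerivAt (fun x : ℝ => 3 * (2*x - 1) * (1 + x)^2)
        (18 * a * (1 + a)) a := by
      have h1 : HasDerivAt (fun x : ℝ => 3 * (2*x - 1)) (3 * 2) a := by
        simpa using (((hasDerivAt_id a).const_mul 2).sub_const 1).const_mul 3
      have h2 : HasDerivAt (fun x : ℝ => (1 + x)^2) (2 * (1 + a)) a := by
        simpa using ((hasDerivAt_id a).const_add 1).fun_pow 2
      have := h1.fun_mul h2
      refine this.congr_deriv ?_
      ring
    have hDd : HasDerivAt
        (fun x : ℝ => Real.sqrt 3 * x^3 + 2 * Real.sqrt 3 * x^2 + Real.sqrt 3 * x - 3)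
        (Real.sqrt 3 * (3 * a ^ 2) + 2 * Real.sqrt 3 * (2 * a) + Real.sqrt 3) a := by
      have h3 : HasDerivAt (fun x : ℝ => Real.sqrt 3 * x ^ 3)
          (Real.sqrt 3 * (3 * a ^ 2)) a := by
        simpa [mul_comm] using (hasDerivAt_pow 3 a).const_mul (Real.sqrt 3)
      have h4 : HasDerivAt (fun x : ℝ => 2 * Real.sqrt 3 * x ^ 2)
          (2 * Real.sqrt 3 * (2 * a)) a := by
        simpa [mul_comm] using (hasDerivAt_pow 2 a).const_mul (2 * Real.sqrt 3)
      have h5 : HasDerivAt (fun x : ℝ => Real.sqrt 3 * x) (Real.sqrt 3) a := by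
        simpa using (hasDerivAt_id a).const_mul (Real.sqrt 3)
      simpa using ((h3.add h4).add h5).sub_const 3
    have hg2 : HasDerivAt g₂
        ((18 * a * (1 + a) * (Real.sqrt 3 * a ^ 3 + 2 * Real.sqrt 3 * a ^ 2 + Real.sqrt 3 * a - 3)
          - 3 * (2*a - 1) * (1 + a)^2
            * (Real.sqrt 3 * (3 * a ^ 2) + 2 * Real.sqrt 3 * (2 * a) + Real.sqrt 3))
          / (Real.sqrt 3 * a ^ 3 + 2 * Real.sqrt 3 * a ^ 2 + Real.sqrt 3 * a - 3) ^ 2) a := by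
      have := hN.fun_div hDd hNe
      convert this using 2
    rw [hg2.deriv]
    rw [div_le_iff₀ (by positivity)]
    have key : 18*a*(a+1)*(5*a-19)
        ≤ Real.sqrt 3 * (15*a^2*(a+1)^4 - 24*(a+1)^4 + 45) := by
      rcases le_or_gt 0 (15*a^2*(a+1)^4 - 24*(a+1)^4 + 45) with hP | hP
      · have h1 : (1.73 : ℝ) * (15*a^2*(a+1)^4 - 24*(a+1)^4 + 45)
            ≤ Real.sqrt 3 * (15*a^2*(a+1)^4 - 24*(a+1)^4 + 45) :=
          mul_le_mul_of_nonneg_right hslb.le hP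
        have h2 : 18*a*(a+1)*(5*a-19)
            ≤ (1.73 : ℝ) * (15*a^2*(a+1)^4 - 24*(a+1)^4 + 45) := by
          nlinarith [sq_nonneg (a-1), sq_nonneg (a+1), pow_pos (by linarith : (0:ℝ) < a) 3,
            mul_nonneg (mul_nonneg (sq_nonneg (a-1)) (sq_nonneg (a+1))) (sq_nonneg a),
            mul_nonneg (sq_nonneg (a-1)) (sq_nonneg (a*(a+1))),
            mul_nonneg (sq_nonneg (a^2-1)) (sq_nonneg a)]
        linarith
      · have h1 : (1.75 : ℝ) * (15*a^2*(a+1)^4 - 24*(a+1)^4 + 45)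
            ≤ Real.sqrt 3 * (15*a^2*(a+1)^4 - 24*(a+1)^4 + 45) := by nlinarith
        have h2 : 18*a*(a+1)*(5*a-19)
            ≤ (1.75 : ℝ) * (15*a^2*(a+1)^4 - 24*(a+1)^4 + 45) := by
          nlinarith [sq_nonneg (a-1), sq_nonneg (a+1), sq_nonneg (a*(a+1)),
            mul_nonneg (sq_nonneg (a-1)) (sq_nonneg (a+1))]
        linarith
    have hid : 5 * Real.sqrt 3 / 8
          * (Real.sqrt 3 * a ^ 3 + 2 * Real.sqrt 3 * a ^ 2 + Real.sqrt 3 * a - 3) ^ 2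
        - (18 * a * (1 + a) * (Real.sqrt 3 * a ^ 3 + 2 * Real.sqrt 3 * a ^ 2 + Real.sqrt 3 * a - 3)
          - 3 * (2*a - 1) * (1 + a)^2
            * (Real.sqrt 3 * (3 * a ^ 2) + 2 * Real.sqrt 3 * (2 * a) + Real.sqrt 3))
        = (Real.sqrt 3 * (15*a^2*(a+1)^4 - 24*(a+1)^4 + 45) - 18*a*(a+1)*(5*a-19)) / 8 := by
      linear_combination (-15/4*a - 15/2*a^2 - 15/4*a^3
        + Real.sqrt 3*(5/8*a^2 + 5/2*a^3 + 15/4*a^4 + 5/2*a^5 + 5/8*a^6)) * hs2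
    linarith
  · have hu : HasDerivAt (fun x : ℝ => 1 + x^2 - x) (2 * a - 1) a := by
      have := ((hasDerivAt_pow 2 a).const_add 1).fun_sub (hasDerivAt_id a)
      refine this.congr_deriv ?_
      push_cast
      ring
    have hupos : (0:ℝ) < 1 + a^2 - a := by nlinarith
    have hg1 : HasDerivAt g₁
        ((2 * a - 1) * ((3:ℝ)/2) * (1 + a^2 - a) ^ ((3:ℝ)/2 - 1)) a :=
      hu.rpow_const (Or.inl (ne_of_gt hupos))
    rw [hg1.deriv]
    have h1le : (1:ℝ) ≤ (1 + a^2 - a) ^ ((3:ℝ)/2 - 1) := by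
      apply Real.one_le_rpow (by nlinarith) (by norm_num)
    nlinarith [mul_le_mul_of_nonneg_left h1le
      (by nlinarith : (0:ℝ) ≤ (2*a - 1) * ((3:ℝ)/2))]
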